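/- Let S ⊆ ℝ^d be a connected open set with 0 < Leb(S) < ∞, and let k(x,y) = λ φ(x − y) where λ > 0 and φ: ℝ^d → [0,∞) is strictly positive on an open ball B(0, 2δ) for some δ > 0. Then k is irreducible: for every measurable A ⊆ S with k = 0 almost everywhere on A × (S \ A), either Leb(A) = 0 or Leb(S \ A) = 0. -/

import Mathlib

open MeasureTheory

lemma aux_isOpen_pos_ball {E : Type*} [MeasurableSpace E] [MetricSpace E]
    (μ : Measure E) (T : Set E) (δ : ℝ) (hδ : 0 < δ) :
    IsOpen {x : E | 0 < μ (T ∩ Metric.ball x δ)} := by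
  rw [Metric.isOpen_iff]
  intro x hx
  simp only [Set.mem_setOf_eq] at hx
  have hmono : Monotone (fun n : ℕ => T ∩ Metric.ball x (δ - δ / (n + 1))) := by
    intro m n hmn
    apply Set.inter_subset_inter_right
    apply Metric.ball_subset_ball
    have h1 : δ / (n + 1) ≤ δ / (m + 1) := by
      apply div_le_div_of_nonneg_left hδ.le (by positivity)
      exact_mod_cast by exact_mod_cast Nat.add_le_add_right hmn 1
    linarith
  have hcup : (⋃ n : ℕ, T ∩ Metric.ball x (δ - δ / (n + 1))) = T ∩ Metric.ball x δ := by
    ext y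
    simp only [Set.mem_iUnion, Set.mem_inter_iff, Metric.mem_ball]
    constructor
    · rintro ⟨n, hT, hd⟩
      refine ⟨hT, hd.trans_le ?_⟩
      have : 0 ≤ δ / (n + 1) := by positivity
      linarith
    · rintro ⟨hT, hd⟩
      obtain ⟨n, hn⟩ := exists_nat_one_div_lt (show 0 < (δ - dist y x) / δ from div_pos (by linarith) hδ)
      refine ⟨n, hT, ?_⟩
      have h2 : δ / (n + 1) < δ - dist y x := by
        have := (div_lt_div_iff₀ (by positivity) hδ).mp hn
        calc δ / (n + 1) = δ * (1 / (n + 1)) := by ring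
        _ < δ * ((δ - dist y x) / δ) := by
            apply mul_lt_mul_of_pos_left hn hδ
        _ = δ - dist y x := by field_simp
      linarith
  rw [← hcup, hmono.directed_le.measure_iUnion] at hx
  rw [lt_iSup_iff] at hx
  obtain ⟨n, hn⟩ := hx
  refine ⟨δ / (n + 1), by positivity, ?_⟩
  intro y hy
  simp only [Set.mem_setOf_eq]
  refine hn.trans_le (measure_mono ?_)
  apply Set.inter_subset_inter_right
  intro z hz
  rw [Metric.mem_ball] at *
  calc dist z y ≤ dist z x + dist x y := dist_triangle _ _ _
  _ < (δ - δ / (n + 1)) + δ / (n + 1) := by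
      apply add_lt_add hz
      rwa [dist_comm]
  _ = δ := by ring

lemma aux_exists_pos_ball {E : Type*} [MeasurableSpace E] [MetricSpace E]
    [SecondCountableTopology E] (μ : Measure E) (T : Set E) (hT : 0 < μ T)
    (δ : ℝ) (hδ : 0 < δ) :
    ∃ x ∈ T, 0 < μ (T ∩ Metric.ball x δ) := by
  by_contra h
  push_neg at h
  have h0 : ∀ x : T, μ (T ∩ Metric.ball (x : E) δ) = 0 := fun x =>
    le_antisymm (h x x.2) zero_le
  obtain ⟨C, hCcount, hCeq⟩ := TopologicalSpace.isOpen_iUnion_countable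
    (fun x : T => Metric.ball (x : E) δ) (fun x => Metric.isOpen_ball)
  have hsub : T ⊆ ⋃ i ∈ C, T ∩ Metric.ball (i : E) δ := by
    intro x hx
    have : x ∈ ⋃ i : T, Metric.ball (i : E) δ :=
      Set.mem_iUnion.mpr ⟨⟨x, hx⟩, Metric.mem_ball_self hδ⟩
    rw [← hCeq] at this
    obtain ⟨i, hiC, hxi⟩ := Set.mem_iUnion₂.mp this
    exact Set.mem_iUnion₂.mpr ⟨i, hiC, hx, hxi⟩
  have : μ T = 0 := by
    refine measure_mono_null hsub ?_
    exact (measure_biUnion_null_iff hCcount).mpr fun i _ => h0 i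
  exact absurd this hT.ne'

/-- Let `S ⊆ ℝ^d` be a connected open set with `0 < Leb(S) < ∞`, and `k(x,y) = λ φ(x-y)`
with `λ > 0` and `φ ≥ 0` strictly positive on the ball `B(0, 2δ)`. Then `k` is irreducible:
if `A ⊆ S` is measurable and `k = 0` a.e. on `A × (S \ A)`, then `Leb(A) = 0` or
`Leb(S \ A) = 0`. -/
theorem kernel_irreducible (d : ℕ) (S : Set (EuclideanSpace ℝ (Fin d)))
    (hScon : IsConnected S) (hSopen : IsOpen S)
    (hS0 : 0 < volume S) (hSfin : volume S < ⊤)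
    (lam : ℝ) (hlam : 0 < lam) (δ : ℝ) (hδ : 0 < δ)
    (φ : EuclideanSpace ℝ (Fin d) → ℝ) (hφmeas : Measurable φ) (hφ0 : ∀ x, 0 ≤ φ x)
    (hφpos : ∀ x, ‖x‖ < 2 * δ → 0 < φ x)
    (k : EuclideanSpace ℝ (Fin d) → EuclideanSpace ℝ (Fin d) → ℝ)
    (hk : ∀ x y, k x y = lam * φ (x - y))
    (A : Set (EuclideanSpace ℝ (Fin d))) (hA : MeasurableSet A) (hAS : A ⊆ S)
    (hzero : (volume.prod volume) {p : EuclideanSpace ℝ (Fin d) × EuclideanSpace ℝ (Fin d) |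
      p ∈ A ×ˢ (S \ A) ∧ k p.1 p.2 ≠ 0} = 0) :
    volume A = 0 ∨ volume (S \ A) = 0 := by
  by_contra hcon
  push_neg at hcon
  obtain ⟨hA0, hB0⟩ := hcon
  set B := S \ A with hBdef
  have hA0' : 0 < volume A := pos_iff_ne_zero.mpr hA0
  have hB0' : 0 < volume B := pos_iff_ne_zero.mpr hB0
  -- The "near-diagonal" part of A ×ˢ B is null
  have hN : (volume.prod volume)
      ((A ×ˢ B) ∩ {p : EuclideanSpace ℝ (Fin d) × EuclideanSpace ℝ (Fin d) |
        dist p.1 p.2 < 2 * δ}) = 0 := by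
    refine measure_mono_null ?_ hzero
    rintro ⟨x, y⟩ ⟨hp, hd⟩
    refine ⟨hp, ?_⟩
    rw [hk]
    have hnorm : ‖x - y‖ < 2 * δ := by
      rwa [← dist_eq_norm]
    exact ne_of_gt (mul_pos hlam (hφpos _ hnorm))
  -- the two open sets
  set u : Set (EuclideanSpace ℝ (Fin d)) :=
    {x | 0 < volume (A ∩ Metric.ball x δ)} with hu
  set v : Set (EuclideanSpace ℝ (Fin d)) :=
    {x | 0 < volume (B ∩ Metric.ball x δ)} with hv
  have huo : IsOpen u := aux_isOpen_pos_ball volume A δ hδ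
  have hvo : IsOpen v := aux_isOpen_pos_ball volume B δ hδ
  have hcover : S ⊆ u ∪ v := by
    intro x hx
    have hball : 0 < volume (S ∩ Metric.ball x δ) := by
      apply (hSopen.inter Metric.isOpen_ball).measure_pos volume
      exact ⟨x, hx, Metric.mem_ball_self hδ⟩
    by_contra hxuv
    simp only [Set.mem_union, Set.mem_setOf_eq, hu, hv, not_or, not_lt,
      nonpos_iff_eq_zero, le_zero_iff] at hxuv
    have hsplit : S ∩ Metric.ball x δ ⊆
        (A ∩ Metric.ball x δ) ∪ (B ∩ Metric.ball x δ) := by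
      rintro z ⟨hzS, hzb⟩
      by_cases hzA : z ∈ A
      · exact Or.inl ⟨hzA, hzb⟩
      · exact Or.inr ⟨⟨hzS, hzA⟩, hzb⟩
    have : volume (S ∩ Metric.ball x δ) = 0 := by
      refine measure_mono_null hsplit ?_
      exact measure_union_null hxuv.1 hxuv.2
    exact absurd this hball.ne'
  have hSu : (S ∩ u).Nonempty := by
    obtain ⟨x, hxA, hx⟩ := aux_exists_pos_ball volume A hA0' δ hδ
    exact ⟨x, hAS hxA, hx⟩
  have hSv : (S ∩ v).Nonempty := by
    obtain ⟨x, hxB, hx⟩ := aux_exists_pos_ball volume B hB0' δ hδ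
    exact ⟨x, hxB.1, hx⟩
  obtain ⟨z, _, hzu, hzv⟩ := hScon.isPreconnected u v huo hvo hcover hSu hSv
  -- contradiction: positive product mass near z
  have hsub : (A ∩ Metric.ball z δ) ×ˢ (B ∩ Metric.ball z δ) ⊆
      (A ×ˢ B) ∩ {p : EuclideanSpace ℝ (Fin d) × EuclideanSpace ℝ (Fin d) |
        dist p.1 p.2 < 2 * δ} := by
    rintro ⟨a, b⟩ ⟨⟨haA, hab⟩, hbB, hbb⟩
    refine ⟨⟨haA, hbB⟩, ?_⟩
    simp only [Set.mem_setOf_eq]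
    calc dist a b ≤ dist a z + dist z b := dist_triangle _ _ _
    _ < δ + δ := by
        apply add_lt_add (Metric.mem_ball.mp hab)
        rw [dist_comm]; exact Metric.mem_ball.mp hbb
    _ = 2 * δ := by ring
  have hprodpos : 0 < (volume.prod volume)
      ((A ∩ Metric.ball z δ) ×ˢ (B ∩ Metric.ball z δ)) := by
    rw [Measure.prod_prod]
    exact ENNReal.mul_pos hzu.ne' hzv.ne'
  exact absurd (measure_mono_null hsub hN) hprodpos.ne'
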